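/- Let B_{l,m} = A_{l,m} / (2^l · (m+l)!/(m−l)!) for 0 ≤ l ≤ m. Then B_{m,m} = 1, B_{m−1,m} = 2m+1, and for 1 ≤ l ≤ m−1 the recurrence B_{l−1,m} = (2m+1)·B_{l,m} − (m−l)(m+l+1)·B_{l+1,m} holds; consequently, B_{l,m} is an odd integer for all 0 ≤ l ≤ m. -/

import Mathlib

open Finset

noncomputable def A (l m : ℕ) : ℚ :=
  ((l.factorial * m.factorial : ℕ) : ℚ) / 2 ^ (m - l) *
    ∑ k ∈ Finset.Icc l m,
      (2 : ℚ) ^ k * ((2 * m - 2 * k).choose (m - k)) * ((m + k).choose m) * (k.choose l)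
noncomputable def B (l m : ℕ) : ℚ :=
  A l m / (2 ^ l * (((m + l).factorial : ℚ) / ((m - l).factorial : ℚ)))

noncomputable def S (l m : ℕ) : ℚ :=
  ∑ k ∈ Finset.Icc l m,
    (2 : ℚ) ^ k * ((2 * m - 2 * k).choose (m - k)) * ((m + k).choose m) * (k.choose l)

noncomputable def Ff (l' m k : ℕ) : ℚ :=
  (2 : ℚ) ^ k * ((2 * m - 2 * k).choose (m - k)) * ((m + k).choose m) * (k.choose l') *
    ((k : ℚ) - l') * (2 * (m : ℚ) + 1 - 2 * k)

lemma B_eq (l m : ℕ) (h : l ≤ m) :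
    B l m = ((l.factorial : ℚ) * m.factorial * ((m - l).factorial : ℚ)) /
      (2 ^ m * ((m + l).factorial : ℚ)) * S l m := by
  have h1 : ((m - l).factorial : ℚ) ≠ 0 := Nat.cast_ne_zero.2 (Nat.factorial_ne_zero _)
  have h2 : ((m + l).factorial : ℚ) ≠ 0 := Nat.cast_ne_zero.2 (Nat.factorial_ne_zero _)
  have hp : (2 : ℚ) ^ (m - l) * 2 ^ l = 2 ^ m := pow_sub_mul_pow 2 h
  have h3 : (2 : ℚ) ^ (m - l) ≠ 0 := by positivity
  have h4 : (2 : ℚ) ^ l ≠ 0 := by positivity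
  have h5 : (2 : ℚ) ^ m ≠ 0 := by positivity
  unfold B A
  rw [show (∑ k ∈ Finset.Icc l m,
      (2 : ℚ) ^ k * ((2 * m - 2 * k).choose (m - k)) * ((m + k).choose m) * (k.choose l)) = S l m
    from rfl]
  field_simp
  push_cast
  linear_combination (-(S l m * (l.factorial : ℚ) * (m.factorial : ℚ))) * hp

lemma shift (l' i j : ℕ) :
    (2:ℚ)^(l'+i+1) * ((2*j).choose j : ℚ) * (((l'+i+j+1) + (l'+i+1)).choose (l'+i+j+1) : ℚ)
        * ((l'+i+1).choose l' : ℚ) * ((i:ℚ)+1) * (2*(j:ℚ)+1)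
      = (2:ℚ)^(l'+i) * ((2*j+2).choose (j+1) : ℚ) * (((l'+i+j+1) + (l'+i)).choose (l'+i+j+1) : ℚ)
        * ((l'+i).choose l' : ℚ) * ((j:ℚ)+1) * (2*(l':ℚ)+2*(i:ℚ)+(j:ℚ)+2) := by
  have n1 : (j + 1) * ((2 * j + 2).choose (j + 1)) = 2 * (2 * j + 1) * ((2 * j).choose j) := by
    have := Nat.succ_mul_centralBinom_succ j
    unfold Nat.centralBinom at this
    rwa [show 2 * (j+1) = 2*j+2 by ring] at this
  have hs1 : ((l'+i+j+1) + (l'+i)).choose (l'+i+j+1) = ((l'+i+j+1) + (l'+i)).choose (l'+i) := by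
    have := Nat.choose_symm (show l'+i ≤ (l'+i+j+1) + (l'+i) by omega)
    rwa [show (l'+i+j+1) + (l'+i) - (l'+i) = l'+i+j+1 by omega] at this
  have hs2 : ((l'+i+j+1) + (l'+i+1)).choose (l'+i+j+1)
      = ((l'+i+j+1) + (l'+i+1)).choose (l'+i+1) := by
    have := Nat.choose_symm (show l'+i+1 ≤ (l'+i+j+1) + (l'+i+1) by omega)
    rwa [show (l'+i+j+1) + (l'+i+1) - (l'+i+1) = l'+i+j+1 by omega] at this
  have n2 : ((l'+i+j+1) + (l'+i) + 1) * (((l'+i+j+1) + (l'+i)).choose (l'+i))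
      = ((l'+i+j+1) + (l'+i) + 1).choose (l'+i+1) * (l'+i+1) :=
    Nat.add_one_mul_choose_eq ((l'+i+j+1) + (l'+i)) (l'+i)
  have n3 : (l'+i).choose l' * (l'+i+1) = (l'+i+1).choose l' * (i+1) := by
    have := Nat.choose_mul_succ_eq (l'+i) l'
    rwa [show l'+i+1 - l' = i + 1 by omega] at this
  have q1 : ((j:ℚ)+1) * ((2*j+2).choose (j+1) : ℚ) = 2*(2*(j:ℚ)+1) * ((2*j).choose j : ℚ) := by
    exact_mod_cast n1
  have q2 : (2*(l':ℚ)+2*(i:ℚ)+(j:ℚ)+2) * (((l'+i+j+1) + (l'+i)).choose (l'+i+j+1) : ℚ)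
      = (((l'+i+j+1) + (l'+i+1)).choose (l'+i+j+1) : ℚ) * ((l':ℚ)+(i:ℚ)+1) := by
    rw [hs1, hs2]
    have := n2
    rw [show (l'+i+j+1) + (l'+i) + 1 = (l'+i+j+1) + (l'+i+1) by omega] at this
    have h : (((l'+i+j+1) + (l'+i+1) : ℕ) : ℚ) * (((l'+i+j+1) + (l'+i)).choose (l'+i) : ℚ)
        = (((l'+i+j+1) + (l'+i+1)).choose (l'+i+1) : ℚ) * ((l'+i+1 : ℕ) : ℚ) := by
      exact_mod_cast this
    push_cast at h
    linear_combination h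
  have q3 : ((l'+i).choose l' : ℚ) * ((l':ℚ)+(i:ℚ)+1) = ((l'+i+1).choose l' : ℚ) * ((i:ℚ)+1) := by
    have h : (((l'+i).choose l' : ℕ) : ℚ) * ((l'+i+1 : ℕ) : ℚ)
        = (((l'+i+1).choose l' : ℕ) : ℚ) * ((i+1 : ℕ) : ℚ) := by exact_mod_cast n3
    push_cast at h
    linear_combination h
  have hD : (((j:ℚ)+1) * (((l':ℚ)+(i:ℚ)+1)) * ((i:ℚ)+1)) ≠ 0 := by positivity
  apply mul_right_cancel₀ hD
  linear_combination
    (-(2:ℚ)^(l'+i) * (((l'+i+j+1) + (l'+i)).choose (l'+i+j+1) : ℚ) * ((l'+i).choose l' : ℚ)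
        * (2*(l':ℚ)+2*(i:ℚ)+(j:ℚ)+2) * ((j:ℚ)+1) * (((l':ℚ)+(i:ℚ)+1)) * ((i:ℚ)+1)) * q1
    + (-(2:ℚ)^(l'+i+1) * (2*(j:ℚ)+1) * ((2*j).choose j : ℚ) * ((l'+i).choose l' : ℚ)
        * ((j:ℚ)+1) * (((l':ℚ)+(i:ℚ)+1)) * ((i:ℚ)+1)) * q2
    + (-(2:ℚ)^(l'+i+1) * (2*(j:ℚ)+1) * ((2*j).choose j : ℚ)
        * (((l'+i+j+1) + (l'+i+1)).choose (l'+i+j+1) : ℚ)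
        * ((j:ℚ)+1) * (((l':ℚ)+(i:ℚ)+1)) * ((i:ℚ)+1)) * q3

lemma key (l m : ℕ) (hl : 1 ≤ l) (hlm : l ≤ m - 1) :
    ((m:ℚ) - l + 1) * ((m:ℚ) + l) * S (l-1) m
      = (2*(m:ℚ)+1) * (l:ℚ) * S l m - (l:ℚ) * ((l:ℚ)+1) * S (l+1) m := by
  obtain ⟨l', rfl⟩ : ∃ l', l = l' + 1 := ⟨l - 1, by omega⟩
  obtain ⟨n, rfl⟩ : ∃ n, m = n + 1 := ⟨m - 1, by omega⟩
  have hln : l' + 1 ≤ n := by omega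
  have main : ∑ k ∈ Finset.Icc l' (n+1),
      (2 : ℚ) ^ k * ((2 * (n+1) - 2 * k).choose ((n+1) - k)) * (((n+1) + k).choose (n+1)) *
        (k.choose l') *
        (((k:ℚ) - l') * ((k:ℚ) - l' - 2*((n:ℚ)+1) - 2) + (((n:ℚ)+1) - l') * (((n:ℚ)+1) + l' + 1))
      = 0 := by
    have tel : ∀ k ∈ Finset.Icc l' n,
        (2 : ℚ) ^ k * ((2 * (n+1) - 2 * k).choose ((n+1) - k)) * (((n+1) + k).choose (n+1)) *
          (k.choose l') *
          (((k:ℚ) - l') * ((k:ℚ) - l' - 2*((n:ℚ)+1) - 2) + (((n:ℚ)+1) - l') * (((n:ℚ)+1) + l' + 1))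
        = Ff l' (n+1) (k+1) - Ff l' (n+1) k := by
      intro k hk
      rw [Finset.mem_Icc] at hk
      obtain ⟨i, rfl⟩ : ∃ i, k = l' + i := ⟨k - l', by omega⟩
      obtain ⟨j, rfl⟩ : ∃ j, n = l' + i + j := ⟨n - (l' + i), by omega⟩
      unfold Ff
      rw [show 2*(l'+i+j+1) - 2*(l'+i) = 2*j+2 by omega,
        show (l'+i+j+1) - (l'+i) = j+1 by omega,
        show 2*(l'+i+j+1) - 2*(l'+i+1) = 2*j by omega,
        show (l'+i+j+1) - (l'+i+1) = j by omega]
      push_cast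
      linear_combination (-1 : ℚ) * shift l' i j
    rw [Finset.sum_Icc_succ_top (show l' ≤ n+1 by omega), Finset.sum_congr rfl tel,
      show Finset.Icc l' n = Finset.Ico l' (n+1) from (Finset.Ico_add_one_right_eq_Icc l' n).symm,
      Finset.sum_Ico_eq_sub _ (show l' ≤ n+1 by omega),
      Finset.sum_range_sub (Ff l' (n+1)), Finset.sum_range_sub (Ff l' (n+1))]
    have hF0 : Ff l' (n+1) l' = 0 := by unfold Ff; ring
    rw [hF0]
    unfold Ff
    rw [show 2*(n+1) - 2*(n+1) = 0 by omega, show (n+1) - (n+1) = 0 by omega]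
    push_cast
    ring
  have hS0 : S (l' + 1 - 1) (n+1) = ∑ k ∈ Finset.Icc l' (n+1),
      (2 : ℚ) ^ k * ((2 * (n+1) - 2 * k).choose ((n+1) - k)) * (((n+1) + k).choose (n+1)) *
        (k.choose l') := by rw [show l' + 1 - 1 = l' by omega]; rfl
  have hS1 : S (l' + 1) (n+1) = ∑ k ∈ Finset.Icc l' (n+1),
      (2 : ℚ) ^ k * ((2 * (n+1) - 2 * k).choose ((n+1) - k)) * (((n+1) + k).choose (n+1)) *
        (k.choose (l'+1)) := by
    unfold S
    apply Finset.sum_subset (Finset.Icc_subset_Icc_left (by omega))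
    intro x hx hx'
    rw [Finset.mem_Icc] at hx
    rw [Finset.mem_Icc] at hx'
    have hz : x.choose (l'+1) = 0 := Nat.choose_eq_zero_of_lt (by omega)
    rw [hz]
    simp
  have hS2 : S (l' + 1 + 1) (n+1) = ∑ k ∈ Finset.Icc l' (n+1),
      (2 : ℚ) ^ k * ((2 * (n+1) - 2 * k).choose ((n+1) - k)) * (((n+1) + k).choose (n+1)) *
        (k.choose (l'+2)) := by
    unfold S
    rw [show l' + 1 + 1 = l' + 2 by omega]
    apply Finset.sum_subset (Finset.Icc_subset_Icc_left (by omega))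
    intro x hx hx'
    rw [Finset.mem_Icc] at hx
    rw [Finset.mem_Icc] at hx'
    have hz : x.choose (l'+2) = 0 := Nat.choose_eq_zero_of_lt (by omega)
    rw [hz]
    simp
  have hb : ∀ k ∈ Finset.Icc l' (n+1),
      (((n:ℚ)+1) - l') * (((n:ℚ)+1) + l' + 1) *
          ((2 : ℚ) ^ k * ((2 * (n+1) - 2 * k).choose ((n+1) - k)) * (((n+1) + k).choose (n+1)) *
            (k.choose l'))
        - (2*((n:ℚ)+1)+1) * ((l':ℚ)+1) *
          ((2 : ℚ) ^ k * ((2 * (n+1) - 2 * k).choose ((n+1) - k)) * (((n+1) + k).choose (n+1)) *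
            (k.choose (l'+1)))
        + ((l':ℚ)+1) * ((l':ℚ)+2) *
          ((2 : ℚ) ^ k * ((2 * (n+1) - 2 * k).choose ((n+1) - k)) * (((n+1) + k).choose (n+1)) *
            (k.choose (l'+2)))
      = (2 : ℚ) ^ k * ((2 * (n+1) - 2 * k).choose ((n+1) - k)) * (((n+1) + k).choose (n+1)) *
          (k.choose l') *
          (((k:ℚ) - l') * ((k:ℚ) - l' - 2*((n:ℚ)+1) - 2) + (((n:ℚ)+1) - l') * (((n:ℚ)+1) + l' + 1)) := by
    intro k hk
    rw [Finset.mem_Icc] at hk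
    have qi : ((l':ℚ)+1) * (k.choose (l'+1) : ℚ) = ((k:ℚ) - l') * (k.choose l' : ℚ) := by
      have h := Nat.choose_succ_right_eq k l'
      have h2 : (k.choose (l'+1) : ℚ) * ((l':ℚ)+1) = (k.choose l' : ℚ) * ((k - l' : ℕ) : ℚ) := by
        exact_mod_cast h
      rw [Nat.cast_sub (by omega : l' ≤ k)] at h2
      linear_combination h2
    have qii : ((l':ℚ)+2) * (k.choose (l'+2) : ℚ) = ((k:ℚ) - l' - 1) * (k.choose (l'+1) : ℚ) := by
      rcases le_or_gt (l'+1) k with hc | hc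
      · have h := Nat.choose_succ_right_eq k (l'+1)
        have h2 : (k.choose (l'+2) : ℚ) * ((l':ℚ)+2)
            = (k.choose (l'+1) : ℚ) * ((k - (l'+1) : ℕ) : ℚ) := by
          exact_mod_cast h
        rw [Nat.cast_sub (by omega : l'+1 ≤ k)] at h2
        push_cast at h2
        linear_combination h2
      · have hk' : k = l' := by omega
        subst hk'
        rw [Nat.choose_eq_zero_of_lt (by omega), Nat.choose_eq_zero_of_lt (by omega)]
        push_cast
        ring
    linear_combination ((2 : ℚ) ^ k * ((2 * (n+1) - 2 * k).choose ((n+1) - k)) *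
        (((n+1) + k).choose (n+1))) *
        ((((k:ℚ) - l' - 2*((n:ℚ)+1) - 2) * qi) + (((l':ℚ)+1) * qii))
  have dist := Finset.sum_congr rfl hb
  rw [Finset.sum_add_distrib, Finset.sum_sub_distrib, ← Finset.mul_sum, ← Finset.mul_sum,
    ← Finset.mul_sum] at dist
  rw [hS0, hS1, hS2]
  push_cast
  linear_combination dist.trans main

lemma B_diag (m : ℕ) : B m m = 1 := by
  rw [B_eq m m le_rfl]
  have hS : S m m = 2 ^ m * ((2 * m).choose m : ℚ) := by
    unfold S; rw [Finset.Icc_self, Finset.sum_singleton]; simp [Nat.sub_self, two_mul]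
  rw [hS, Nat.sub_self, show m + m = 2 * m by ring]
  have hc : ((2 * m).choose m : ℚ) * m.factorial * m.factorial = (2 * m).factorial := by
    have := Nat.choose_mul_factorial_mul_factorial (show m ≤ 2 * m by omega)
    rw [show 2 * m - m = m by omega] at this
    exact_mod_cast this
  have h2 : ((2 * m).factorial : ℚ) ≠ 0 := Nat.cast_ne_zero.2 (Nat.factorial_ne_zero _)
  have h5 : (2 : ℚ) ^ m ≠ 0 := by positivity
  field_simp [Nat.factorial_zero]
  linear_combination hc

lemma B_subdiag (m : ℕ) (hm : 1 ≤ m) : B (m - 1) m = 2 * m + 1 := by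
  obtain ⟨n, rfl⟩ : ∃ n, m = n + 1 := ⟨m - 1, by omega⟩
  rw [show n + 1 - 1 = n by omega, B_eq n (n+1) (by omega)]
  have hS : S n (n + 1) =
      2 ^ n * 2 * ((2 * n + 1).choose (n + 1) : ℚ) +
        2 ^ (n + 1) * ((2 * n + 2).choose (n + 1) : ℚ) * (n + 1) := by
    unfold S
    rw [Finset.sum_Icc_succ_top (Nat.le_succ n), Finset.Icc_self, Finset.sum_singleton]
    rw [show 2 * (n+1) - 2 * n = 2 by omega, show (n+1) - n = 1 by omega,
      show (n+1) + n = 2*n+1 by ring, show 2*(n+1) - 2*(n+1) = 0 by omega,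
      show (n+1) - (n+1) = 0 by omega, show (n+1) + (n+1) = 2*n+2 by ring]
    simp [Nat.choose_self, Nat.choose_one_right, Nat.choose_succ_self_right]
  rw [hS, show n + 1 - n = 1 by omega, show (n+1) + n = 2*n+1 by ring]
  have hc1 : ((2*n+1).choose (n+1) : ℚ) * (n+1).factorial * n.factorial = (2*n+1).factorial := by
    have := Nat.choose_mul_factorial_mul_factorial (show n+1 ≤ 2*n+1 by omega)
    rw [show 2*n+1 - (n+1) = n by omega] at this
    exact_mod_cast this
  have hc2 : ((2*n+2).choose (n+1) : ℚ) * (n+1).factorial * (n+1).factorial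
      = (2*n+2).factorial := by
    have := Nat.choose_mul_factorial_mul_factorial (show n+1 ≤ 2*n+2 by omega)
    rw [show 2*n+2 - (n+1) = n+1 by omega] at this
    exact_mod_cast this
  have hf1 : ((2*n+2).factorial : ℚ) = (2*n+2) * (2*n+1).factorial := by
    rw [show (2*n+2) = (2*n+1)+1 by ring, Nat.factorial_succ]; push_cast; ring
  have hf2 : ((n+1).factorial : ℚ) = (n+1) * n.factorial := by
    rw [Nat.factorial_succ]; push_cast; ring
  have h2 : ((2*n+1).factorial : ℚ) ≠ 0 := Nat.cast_ne_zero.2 (Nat.factorial_ne_zero _)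
  have h3 : (n.factorial : ℚ) ≠ 0 := Nat.cast_ne_zero.2 (Nat.factorial_ne_zero _)
  have h5 : (2 : ℚ) ^ n ≠ 0 := by positivity
  rw [hf1] at hc2
  rw [hf2] at hc1 hc2
  have hD : (2:ℚ) ^ (n+1) * ((2*n+1).factorial : ℚ) ≠ 0 := by positivity
  rw [hf2, div_mul_eq_mul_div, div_eq_iff hD]
  push_cast
  simp only [Nat.factorial_one, Nat.cast_one]
  linear_combination ((2:ℚ)^(n+1)) * hc1 + ((2:ℚ)^(n+1)) * hc2

lemma B_rec (m l : ℕ) (hl : 1 ≤ l) (hlm : l ≤ m - 1) :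
    B (l-1) m = (2 * (m:ℚ) + 1) * B l m - ((m : ℚ) - l) * ((m:ℚ) + l + 1) * B (l + 1) m := by
  obtain ⟨a, rfl⟩ : ∃ a, l = a + 1 := ⟨l - 1, by omega⟩
  obtain ⟨c, rfl⟩ : ∃ c, m = a + c + 2 := ⟨m - a - 2, by omega⟩
  have hkey := key (a+1) (a+c+2) (by omega) (by omega)
  rw [show a + 1 - 1 = a by omega] at hkey ⊢
  rw [B_eq a (a+c+2) (by omega), B_eq (a+1) (a+c+2) (by omega), B_eq (a+2) (a+c+2) (by omega)]
  rw [show a + 1 + 1 = a + 2 by omega] at *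
  rw [show a+c+2 - a = c+2 by omega, show a+c+2 - (a+1) = c+1 by omega,
    show a+c+2 - (a+2) = c by omega, show a+c+2 + a = 2*a+c+2 by ring,
    show a+c+2 + (a+1) = 2*a+c+3 by ring, show a+c+2 + (a+2) = 2*a+c+4 by ring]
  have hSa : S a (a+c+2) = ((2*((a:ℚ)+c+2)+1) * ((a:ℚ)+1) * S (a+1) (a+c+2)
      - ((a:ℚ)+1)*((a:ℚ)+2) * S (a+2) (a+c+2)) / (((c:ℚ)+2) * ((a:ℚ)+c+2+((a:ℚ)+1))) := by
    rw [eq_div_iff (by positivity)]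
    push_cast at hkey
    linear_combination hkey
  rw [hSa]
  have hf1 : ((c+2).factorial : ℚ) = ((c:ℚ)+2)*((c:ℚ)+1)*(c.factorial : ℚ) := by
    rw [show c+2 = (c+1)+1 by ring, Nat.factorial_succ, Nat.factorial_succ]; push_cast; ring
  have hf2 : ((c+1).factorial : ℚ) = ((c:ℚ)+1)*(c.factorial : ℚ) := by
    rw [Nat.factorial_succ]; push_cast; ring
  have hf3 : ((a+1).factorial : ℚ) = ((a:ℚ)+1)*(a.factorial : ℚ) := by
    rw [Nat.factorial_succ]; push_cast; ring
  have hf4 : ((a+2).factorial : ℚ) = ((a:ℚ)+2)*((a:ℚ)+1)*(a.factorial : ℚ) := by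
    rw [show a+2 = (a+1)+1 by ring, Nat.factorial_succ, Nat.factorial_succ]; push_cast; ring
  have hf5 : ((2*a+c+3).factorial : ℚ) = (2*(a:ℚ)+c+3)*((2*a+c+2).factorial : ℚ) := by
    rw [show 2*a+c+3 = (2*a+c+2)+1 by ring, Nat.factorial_succ]; push_cast; ring
  have hf6 : ((2*a+c+4).factorial : ℚ)
      = (2*(a:ℚ)+c+4)*(2*(a:ℚ)+c+3)*((2*a+c+2).factorial : ℚ) := by
    rw [show 2*a+c+4 = (2*a+c+3)+1 by ring, Nat.factorial_succ]; push_cast; rw [hf5]; ring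
  rw [hf1, hf2, hf4, hf3, hf5, hf6]
  have hna : ((a.factorial : ℚ)) ≠ 0 := Nat.cast_ne_zero.2 (Nat.factorial_ne_zero _)
  have hnc : ((c.factorial : ℚ)) ≠ 0 := Nat.cast_ne_zero.2 (Nat.factorial_ne_zero _)
  have hnm : (((a+c+2).factorial : ℚ)) ≠ 0 := Nat.cast_ne_zero.2 (Nat.factorial_ne_zero _)
  have hng : (((2*a+c+2).factorial : ℚ)) ≠ 0 := Nat.cast_ne_zero.2 (Nat.factorial_ne_zero _)
  have hp : (2:ℚ)^(a+c+2) ≠ 0 := by positivity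
  push_cast
  field_simp
  ring

def d (m : ℕ) : ℕ → ℤ
  | 0 => 1
  | 1 => 2 * m + 1
  | (i + 2) => (2 * (m:ℤ) + 1) * d m (i + 1) - ((i:ℤ) + 1) * (2 * (m:ℤ) - i) * d m i

lemma d_odd (m : ℕ) : ∀ i, Odd (d m i) := by
  have H : ∀ i, Odd (d m i) ∧ Odd (d m (i + 1)) := by
    intro i
    induction i with
    | zero => exact ⟨⟨0, rfl⟩, ⟨(m : ℤ), by simp [d]⟩⟩
    | succ n ih =>
      refine ⟨ih.2, ?_⟩
      have heven : Even (((n:ℤ) + 1) * (2 * (m:ℤ) - n)) := by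
        have hsq : Even ((n:ℤ) * (n + 1)) := Int.even_mul_succ_self n
        have h2 : ((n:ℤ) + 1) * (2 * (m:ℤ) - n) = ((n:ℤ) + 1) * (2 * (m:ℤ)) - (n:ℤ) * (n + 1) := by
          ring
        rw [h2]
        exact ((even_two_mul (m:ℤ)).mul_left _).sub hsq
      have h1 : Odd ((2 * (m:ℤ) + 1) * d m (n + 1)) := Odd.mul (by exact ⟨(m:ℤ), by ring⟩) ih.2
      have h2 : Even (((n:ℤ) + 1) * (2 * (m:ℤ) - n) * d m n) := heven.mul_right _
      show Odd ((2 * (m:ℤ) + 1) * d m (n + 1) - ((n:ℤ) + 1) * (2 * (m:ℤ) - n) * d m n)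
      exact h1.sub_even h2
  exact fun i => (H i).1

lemma d_pos (m : ℕ) : ∀ i, i ≤ m → 1 ≤ d m i := by
  have H : ∀ i, i + 1 ≤ m → (1 ≤ d m i ∧ ((m:ℤ) + 2) * d m i ≤ d m (i + 1)) := by
    intro i
    induction i with
    | zero =>
      intro h
      constructor
      · norm_num [d]
      · show ((m:ℤ) + 2) * d m 0 ≤ d m 1
        simp only [d]
        have : (1:ℤ) ≤ (m:ℤ) := by exact_mod_cast h
        nlinarith
    | succ n ih =>
      intro h
      obtain ⟨h1, h2⟩ := ih (by omega)
      have hd1 : (1:ℤ) ≤ d m (n + 1) := by nlinarith [Int.natCast_nonneg m]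
      refine ⟨hd1, ?_⟩
      show ((m:ℤ) + 2) * d m (n + 1)
          ≤ (2 * (m:ℤ) + 1) * d m (n + 1) - ((n:ℤ) + 1) * (2 * (m:ℤ) - n) * d m n
      have hb : ((n:ℤ) + 1) * (2 * (m:ℤ) - n) ≤ ((m:ℤ) - 1) * ((m:ℤ) + 2) := by
        have hnm : (n:ℤ) + 2 ≤ (m:ℤ) := by exact_mod_cast h
        have h3 : (0:ℤ) ≤ ((m:ℤ) - n - 2) * ((m:ℤ) - n + 1) := by
          apply mul_nonneg <;> omega
        nlinarith
      have hbb : ((n:ℤ) + 1) * (2 * (m:ℤ) - n) * d m n ≤ ((m:ℤ) - 1) * ((m:ℤ) + 2) * d m n := by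
        apply mul_le_mul_of_nonneg_right hb (by omega)
      have hc : ((m:ℤ) + 2) * d m n * ((m:ℤ) - 1) ≤ d m (n+1) * ((m:ℤ) - 1) := by
        apply mul_le_mul_of_nonneg_right h2
        have : (n:ℤ) + 2 ≤ (m:ℤ) := by exact_mod_cast h
        omega
      nlinarith
  intro i hi
  rcases Nat.lt_or_ge i m with hlt | hge
  · exact (H i (by omega)).1
  · have him : i = m := le_antisymm hi hge
    subst him
    rcases Nat.eq_zero_or_pos i with h0 | hpos
    · subst h0; norm_num [d]
    · obtain ⟨n, rfl⟩ : ∃ n, i = n + 1 := ⟨i - 1, by omega⟩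
      obtain ⟨hp1, hp2⟩ := H n (le_refl _)
      nlinarith [Int.natCast_nonneg n]

theorem B_properties (m : ℕ) :
    B m m = 1 ∧
    (1 ≤ m → B (m - 1) m = 2 * m + 1) ∧
    (∀ l : ℕ, 1 ≤ l → l ≤ m - 1 →
      B (l - 1) m = (2 * m + 1) * B l m - ((m : ℚ) - l) * (m + l + 1) * B (l + 1) m) ∧
    (∀ l ≤ m, ∃ b : ℕ, Odd b ∧ B l m = b) := by
  refine ⟨B_diag m, B_subdiag m, fun l hl hlm => B_rec m l hl hlm, ?_⟩
  have hBd : ∀ i l, l + i = m → B l m = ((d m i : ℤ) : ℚ) := by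
    intro i
    induction i using Nat.strong_induction_on with
    | _ i ih =>
      match i with
      | 0 =>
        intro l hl
        have : l = m := by omega
        subst this
        simp [d, B_diag]
      | 1 =>
        intro l hl
        have hm1 : 1 ≤ m := by omega
        have hlm : l = m - 1 := by omega
        subst hlm
        rw [B_subdiag m hm1]
        simp [d]
      | (n+2) =>
        intro l hl
        have e1 := ih (n+1) (by omega) (l+1) (by omega)
        have e0 := ih n (by omega) (l+2) (by omega)
        have hr := B_rec m (l+1) (by omega) (by omega)
        rw [show l+1-1 = l by omega] at hr
        rw [hr, e1, e0]
        rw [show d m (n+2)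
          = (2 * (m:ℤ) + 1) * d m (n + 1) - ((n:ℤ) + 1) * (2 * (m:ℤ) - n) * d m n from rfl]
        have hm' : (m:ℚ) = (l:ℚ) + n + 2 := by exact_mod_cast congrArg (Nat.cast : ℕ → ℚ) hl.symm
        push_cast
        rw [hm']
        ring
  intro l hl
  have hd := hBd (m - l) l (by omega)
  have hpos := d_pos m (m - l) (by omega)
  have hodd := d_odd m (m - l)
  refine ⟨(d m (m - l)).toNat, ?_, ?_⟩
  · rw [← Int.odd_coe_nat]
    rwa [Int.toNat_of_nonneg (by omega)]
  · rw [hd]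
    have : ((d m (m - l)).toNat : ℤ) = d m (m - l) := Int.toNat_of_nonneg (by omega)
    exact_mod_cast this.symm
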